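/- (Switching principle I, first identity.) Let G = (V,E) be a finite simple graph with edge weights K : E → ℂ, let M1, M2 ⊆ V be disjoint, and let x, y ∈ V ∖ (M1 ∪ M2) be distinct. Then for any finite list C of pairs of vertices taken from M1 ∪ M2, Z^{(2)}_{G,K}(M1 ∪ {x,y}, M2; x ↔ y and C) = Z^{(2)}_{G,K}(M1, M2 ∪ {x,y}; x ↔ y and C). -/

import Mathlib

open scoped Classical symmDiff
open Finset

/-- `ω` is a dimer cover (perfect matching) of the graph `G` depleted by the
monomer set `M`. -/
def IsDimerCover {V : Type*} (G : SimpleGraph V) (M : Finset V)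
    (ω : Finset (Sym2 V)) : Prop :=
  (∀ e ∈ ω, e ∈ G.edgeSet) ∧
  (∀ v ∈ M, ∀ e ∈ ω, v ∉ e) ∧
  (∀ v : V, v ∉ M → ∃! e, e ∈ ω ∧ v ∈ e)

/-- The spanning subgraph of the overlay `ω₁ Δ ω₂`. -/
def symmGraph {V : Type*} [DecidableEq V] (ω₁ ω₂ : Finset (Sym2 V)) : SimpleGraph V :=
  SimpleGraph.fromEdgeSet (↑(ω₁ ∆ ω₂) : Set (Sym2 V))

/-- The double dimer partition function `Z²_{G,K}(M₁, M₂; C)` restricted by the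
connection conditions `C`: a list of pairs `(u, v)` each required to lie in the
same connected component of the overlay `ω₁ Δ ω₂`. -/
noncomputable def Zdouble {V : Type*} [Fintype V] [DecidableEq V]
    (G : SimpleGraph V) (K : Sym2 V → ℂ) (M₁ M₂ : Finset V) (C : List (V × V)) : ℂ :=
  ∑ p ∈ Finset.univ.filter (fun p : Finset (Sym2 V) × Finset (Sym2 V) =>
      IsDimerCover G M₁ p.1 ∧ IsDimerCover G M₂ p.2 ∧
      ∀ c ∈ C, (symmGraph p.1 p.2).Reachable c.1 c.2),
    (∏ b ∈ p.1, K b) * ∏ b ∈ p.2, K b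

set_option linter.unusedSectionVars false

section Aux

variable {V : Type*} [DecidableEq V]


/-- edges of `s` incident to `v`. -/
noncomputable def edgesAt (s : Finset (Sym2 V)) (v : V) : Finset (Sym2 V) :=
  s.filter (fun e => v ∈ e)

lemma mem_edgesAt {s : Finset (Sym2 V)} {v : V} {e : Sym2 V} :
    e ∈ edgesAt s v ↔ e ∈ s ∧ v ∈ e := by simp [edgesAt]

lemma edgesAt_card_le_one {G : SimpleGraph V} {M : Finset V} {ω : Finset (Sym2 V)}
    (h : IsDimerCover G M ω) (v : V) : (edgesAt ω v).card ≤ 1 := by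
  apply Finset.card_le_one.2
  intro a ha b hb
  rw [mem_edgesAt] at ha hb
  by_cases hv : v ∈ M
  · exact absurd ha.2 (h.2.1 v hv a ha.1)
  · obtain ⟨e, -, hu⟩ := h.2.2 v hv
    rw [hu a ha, hu b hb]

lemma edgesAt_monomer {G : SimpleGraph V} {M : Finset V} {ω : Finset (Sym2 V)}
    (h : IsDimerCover G M ω) {v : V} (hv : v ∈ M) : edgesAt ω v = ∅ := by
  ext e; simp only [mem_edgesAt, Finset.notMem_empty, iff_false, not_and]
  exact h.2.1 v hv e

lemma symmGraph_adj {ω₁ ω₂ : Finset (Sym2 V)} {a b : V} :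
    (symmGraph ω₁ ω₂).Adj a b ↔ s(a, b) ∈ ω₁ ∆ ω₂ ∧ a ≠ b := by
  simp only [symmGraph, SimpleGraph.fromEdgeSet_adj, Finset.coe_symmDiff, Set.mem_symmDiff,
    Finset.mem_coe, Finset.mem_symmDiff]

lemma edgesAt_symmDiff_subset (ω₁ ω₂ : Finset (Sym2 V)) (v : V) :
    edgesAt (ω₁ ∆ ω₂) v ⊆ edgesAt ω₁ v ∪ edgesAt ω₂ v := by
  intro e he
  rw [mem_edgesAt, Finset.mem_symmDiff] at he
  rw [Finset.mem_union, mem_edgesAt, mem_edgesAt]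
  tauto

/-- the overlay has max degree 2, counted by incident edges. -/
lemma edgesAt_symmDiff_card_le_two {G : SimpleGraph V} {M₁ M₂ : Finset V}
    {ω₁ ω₂ : Finset (Sym2 V)} (h1 : IsDimerCover G M₁ ω₁) (h2 : IsDimerCover G M₂ ω₂) (v : V) :
    (edgesAt (ω₁ ∆ ω₂) v).card ≤ 2 := by
  calc (edgesAt (ω₁ ∆ ω₂) v).card ≤ (edgesAt ω₁ v ∪ edgesAt ω₂ v).card :=
        Finset.card_le_card (edgesAt_symmDiff_subset ω₁ ω₂ v)
    _ ≤ (edgesAt ω₁ v).card + (edgesAt ω₂ v).card := Finset.card_union_le _ _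
    _ ≤ 1 + 1 := Nat.add_le_add (edgesAt_card_le_one h1 v) (edgesAt_card_le_one h2 v)

/-- a monomer of `ω₁` has overlay degree ≤ 1. -/
lemma edgesAt_symmDiff_card_le_one_left {G : SimpleGraph V} {M₁ M₂ : Finset V}
    {ω₁ ω₂ : Finset (Sym2 V)} (h1 : IsDimerCover G M₁ ω₁) (h2 : IsDimerCover G M₂ ω₂)
    {v : V} (hv : v ∈ M₁) : (edgesAt (ω₁ ∆ ω₂) v).card ≤ 1 := by
  have hsub : edgesAt (ω₁ ∆ ω₂) v ⊆ edgesAt ω₂ v := by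
    intro e he
    have := edgesAt_symmDiff_subset ω₁ ω₂ v he
    rw [Finset.mem_union] at this
    rcases this with h | h
    · rw [mem_edgesAt] at h
      exact absurd h.2 (h1.2.1 v hv e h.1)
    · exact h
  exact (Finset.card_le_card hsub).trans (edgesAt_card_le_one h2 v)

lemma adj_edge_mem_edgesAt {ω₁ ω₂ : Finset (Sym2 V)} {a b : V}
    (h : (symmGraph ω₁ ω₂).Adj a b) : s(a, b) ∈ edgesAt (ω₁ ∆ ω₂) a := by
  rw [mem_edgesAt]
  exact ⟨(symmGraph_adj.1 h).1, Sym2.mem_mk_left a b⟩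


lemma mem_of_card_le_two {α : Type*} [DecidableEq α] {s : Finset α} (hcard : s.card ≤ 2)
    {a b c : α} (ha : a ∈ s) (hb : b ∈ s) (hc : c ∈ s) (hab : a ≠ b) : c = a ∨ c = b := by
  by_contra h
  push_neg at h
  have hsub : ({c, a, b} : Finset α) ⊆ s := by
    intro z hz
    simp only [Finset.mem_insert, Finset.mem_singleton] at hz
    rcases hz with rfl | rfl | rfl <;> assumption
  have h3 : ({c, a, b} : Finset α).card = 3 := by
    rw [Finset.card_insert_of_notMem (by simp [h.1, h.2]),
      Finset.card_insert_of_notMem (by simp [hab]), Finset.card_singleton]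
  have := Finset.card_le_card hsub
  omega

lemma getVert_injOn' {G : SimpleGraph V} {u v : V} {p : G.Walk u v} (hp : p.IsPath) :
    ∀ i ≤ p.length, ∀ j ≤ p.length, p.getVert i = p.getVert j → i = j := by
  induction p with
  | nil => intro i hi j hj _; simp at hi hj; omega
  | @cons a b c h q ih =>
    rw [SimpleGraph.Walk.cons_isPath_iff] at hp
    intro i hi j hj hij
    match i, j with
    | 0, 0 => rfl
    | 0, j + 1 =>
      exfalso
      apply hp.2
      rw [SimpleGraph.Walk.mem_support_iff_exists_getVert]
      exact ⟨j, by simpa using hij.symm, by simpa using hj⟩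
    | i + 1, 0 =>
      exfalso
      apply hp.2
      rw [SimpleGraph.Walk.mem_support_iff_exists_getVert]
      exact ⟨i, by simpa using hij, by simpa using hi⟩
    | i + 1, j + 1 =>
      have := ih hp.1 i (by simpa using hi) j (by simpa using hj) (by simpa using hij)
      omega

lemma getVert_mem_support' {G : SimpleGraph V} {u v : V} (p : G.Walk u v) {i : ℕ}
    (hi : i ≤ p.length) : p.getVert i ∈ p.support :=
  SimpleGraph.Walk.mem_support_iff_exists_getVert.2 ⟨i, rfl, hi⟩


lemma support_closed {G : SimpleGraph V} {A B : Finset V} {x y : V} {ω₁ ω₂ : Finset (Sym2 V)}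
    (h1 : IsDimerCover G (A ∪ {x, y}) ω₁) (h2 : IsDimerCover G B ω₂)
    (hxy : x ≠ y) {p : (symmGraph ω₁ ω₂).Walk x y} (hp : p.IsPath) :
    ∀ u ∈ p.support, ∀ w, (symmGraph ω₁ ω₂).Adj u w → w ∈ p.support := by
  have hlen : 0 < p.length := by
    rcases Nat.eq_zero_or_pos p.length with h | h
    · exact absurd (SimpleGraph.Walk.eq_of_length_eq_zero h) hxy
    · exact h
  intro u hu w hadj
  obtain ⟨i, hieq, hile⟩ := SimpleGraph.Walk.mem_support_iff_exists_getVert.1 hu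
  have hmemw : s(u, w) ∈ edgesAt (ω₁ ∆ ω₂) u := adj_edge_mem_edgesAt hadj
  by_cases hi0 : i = 0
  · -- u = x, endpoint
    have hux : u = x := by rw [← hieq, hi0, SimpleGraph.Walk.getVert_zero]
    subst hux
    have hcard : (edgesAt (ω₁ ∆ ω₂) u).card ≤ 1 :=
      edgesAt_symmDiff_card_le_one_left h1 h2 (by simp)
    have hadj1 : (symmGraph ω₁ ω₂).Adj u (p.getVert 1) := by
      have := p.adj_getVert_succ hlen
      simpa using this
    have hmem1 : s(u, p.getVert 1) ∈ edgesAt (ω₁ ∆ ω₂) u := adj_edge_mem_edgesAt hadj1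
    have : s(u, w) = s(u, p.getVert 1) := Finset.card_le_one.1 hcard _ hmemw _ hmem1
    rw [Sym2.congr_right.1 this]
    exact getVert_mem_support' p hlen
  · by_cases hil : i = p.length
    · -- u = y, endpoint
      have huy : u = y := by rw [← hieq, hil, SimpleGraph.Walk.getVert_length]
      subst huy
      have hcard : (edgesAt (ω₁ ∆ ω₂) u).card ≤ 1 :=
        edgesAt_symmDiff_card_le_one_left h1 h2 (by simp)
      have hadj1 : (symmGraph ω₁ ω₂).Adj u (p.getVert (p.length - 1)) := by
        have := p.adj_getVert_succ (i := p.length - 1) (by omega)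
        have h' : p.length - 1 + 1 = p.length := by omega
        rw [h', SimpleGraph.Walk.getVert_length] at this
        exact this.symm
      have hmem1 : s(u, p.getVert (p.length - 1)) ∈ edgesAt (ω₁ ∆ ω₂) u :=
        adj_edge_mem_edgesAt hadj1
      have : s(u, w) = s(u, p.getVert (p.length - 1)) :=
        Finset.card_le_one.1 hcard _ hmemw _ hmem1
      rw [Sym2.congr_right.1 this]
      exact getVert_mem_support' p (by omega)
    · -- internal vertex
      have hilt : i < p.length := lt_of_le_of_ne hile hil
      have hipos : 0 < i := Nat.pos_of_ne_zero hi0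
      set a := p.getVert (i - 1) with ha
      set b := p.getVert (i + 1) with hb
      have hadja : (symmGraph ω₁ ω₂).Adj u a := by
        have := p.adj_getVert_succ (i := i - 1) (by omega)
        have h' : i - 1 + 1 = i := by omega
        rw [h', hieq] at this
        exact this.symm
      have hadjb : (symmGraph ω₁ ω₂).Adj u b := by
        have := p.adj_getVert_succ hilt
        rwa [hieq] at this
      have hab : a ≠ b := by
        intro h
        have := getVert_injOn' hp (i - 1) (by omega) (i + 1) (by omega) h
        omega
      have hne : s(u, a) ≠ s(u, b) := fun h => hab (Sym2.congr_right.1 h)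
      have hcard : (edgesAt (ω₁ ∆ ω₂) u).card ≤ 2 := edgesAt_symmDiff_card_le_two h1 h2 u
      rcases mem_of_card_le_two hcard (adj_edge_mem_edgesAt hadja)
          (adj_edge_mem_edgesAt hadjb) hmemw hne with h | h
      · rw [Sym2.congr_right.1 h]
        exact getVert_mem_support' p (by omega)
      · rw [Sym2.congr_right.1 h]
        exact getVert_mem_support' p (by omega)

/-- Structural lemma: every vertex on the overlay component of `x` other than `x, y`
is matched in both covers, hence is not a monomer. -/
lemma reachable_not_monomer {G : SimpleGraph V} {A B : Finset V} {x y : V}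
    {ω₁ ω₂ : Finset (Sym2 V)}
    (h1 : IsDimerCover G (A ∪ {x, y}) ω₁) (h2 : IsDimerCover G B ω₂)
    (hxy : x ≠ y) (hreach : (symmGraph ω₁ ω₂).Reachable x y) :
    ∀ v, (symmGraph ω₁ ω₂).Reachable x v → v ≠ x → v ≠ y → v ∉ A ∪ B := by
  obtain ⟨q⟩ := hreach
  set p : (symmGraph ω₁ ω₂).Walk x y := (q.toPath : (symmGraph ω₁ ω₂).Path x y).1 with hpdef
  have hp : p.IsPath := q.toPath.2
  have hclosed := support_closed h1 h2 hxy hp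
  have hsup : ∀ v, (symmGraph ω₁ ω₂).Reachable x v → v ∈ p.support := by
    have key : ∀ (a b : V) (r : (symmGraph ω₁ ω₂).Walk a b),
        a ∈ p.support → b ∈ p.support := by
      intro a b r
      induction r with
      | nil => exact id
      | cons h r ih => exact fun ha => ih (hclosed _ ha _ h)
    intro v hv
    obtain ⟨r⟩ := hv
    exact key x v r p.start_mem_support
  intro v hv hvx hvy hmem
  obtain ⟨i, hieq, hile⟩ := SimpleGraph.Walk.mem_support_iff_exists_getVert.1 (hsup v hv)
  have hi0 : i ≠ 0 := by
    intro h; apply hvx; rw [← hieq, h, SimpleGraph.Walk.getVert_zero]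
  have hil : i ≠ p.length := by
    intro h; apply hvy; rw [← hieq, h, SimpleGraph.Walk.getVert_length]
  have hilt : i < p.length := lt_of_le_of_ne hile hil
  have hipos : 0 < i := Nat.pos_of_ne_zero hi0
  -- two distinct incident overlay edges
  have hadja : (symmGraph ω₁ ω₂).Adj v (p.getVert (i - 1)) := by
    have := p.adj_getVert_succ (i := i - 1) (by omega)
    have h' : i - 1 + 1 = i := by omega
    rw [h', hieq] at this
    exact this.symm
  have hadjb : (symmGraph ω₁ ω₂).Adj v (p.getVert (i + 1)) := by
    have := p.adj_getVert_succ hilt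
    rwa [hieq] at this
  have hab : p.getVert (i - 1) ≠ p.getVert (i + 1) := by
    intro h
    have := getVert_injOn' hp (i - 1) (by omega) (i + 1) (by omega) h
    omega
  have hne : s(v, p.getVert (i - 1)) ≠ s(v, p.getVert (i + 1)) :=
    fun h => hab (Sym2.congr_right.1 h)
  have h2le : 2 ≤ (edgesAt (ω₁ ∆ ω₂) v).card := by
    have hsub : ({s(v, p.getVert (i - 1)), s(v, p.getVert (i + 1))} : Finset (Sym2 V)) ⊆
        edgesAt (ω₁ ∆ ω₂) v := by
      intro z hz
      simp only [Finset.mem_insert, Finset.mem_singleton] at hz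
      rcases hz with rfl | rfl
      · exact adj_edge_mem_edgesAt hadja
      · exact adj_edge_mem_edgesAt hadjb
    calc 2 = ({s(v, p.getVert (i - 1)), s(v, p.getVert (i + 1))} : Finset (Sym2 V)).card :=
          (Finset.card_pair hne).symm
      _ ≤ _ := Finset.card_le_card hsub
  rw [Finset.mem_union] at hmem
  rcases hmem with hA | hB
  · have : (edgesAt (ω₁ ∆ ω₂) v).card ≤ 1 :=
      edgesAt_symmDiff_card_le_one_left h1 h2 (by simp [hA])
    omega
  · have : (edgesAt (ω₂ ∆ ω₁) v).card ≤ 1 :=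
      edgesAt_symmDiff_card_le_one_left h2 h1 hB
    rw [symmDiff_comm] at this
    omega


lemma sd_pair {α : Type*} [DecidableEq α] (a b c : Finset α) :
    (a ∆ c) ∆ (b ∆ c) = a ∆ b := by
  rw [symmDiff_assoc, symmDiff_comm b c, symmDiff_symmDiff_cancel_left]

lemma sd_cancel {α : Type*} [DecidableEq α] (a c : Finset α) : (a ∆ c) ∆ c = a := by
  rw [symmDiff_assoc, symmDiff_self, symmDiff_bot]

lemma symmGraph_comm (ω₁ ω₂ : Finset (Sym2 V)) : symmGraph ω₁ ω₂ = symmGraph ω₂ ω₁ := by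
  unfold symmGraph; rw [symmDiff_comm]

/-- the overlay component of `x`: the overlay edges incident to a vertex reachable from `x`. -/
noncomputable def Pof (x : V) (s : Finset (Sym2 V)) : Finset (Sym2 V) :=
  s.filter (fun e => ∃ v ∈ e, (SimpleGraph.fromEdgeSet (↑s : Set (Sym2 V))).Reachable x v)

lemma Pof_subset (x : V) (s : Finset (Sym2 V)) : Pof x s ⊆ s := Finset.filter_subset _ _

lemma mem_Pof {ω₁ ω₂ : Finset (Sym2 V)} {x v : V} {e : Sym2 V} (hve : v ∈ e) :
    e ∈ Pof x (ω₁ ∆ ω₂) ↔ e ∈ ω₁ ∆ ω₂ ∧ (symmGraph ω₁ ω₂).Reachable x v := by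
  constructor
  · intro h
    rw [Pof, Finset.mem_filter] at h
    obtain ⟨hmem, u, hue, hru⟩ := h
    refine ⟨hmem, ?_⟩
    by_cases huv : u = v
    · exact huv ▸ hru
    · have he : e = s(u, v) := (Sym2.mem_and_mem_iff huv).1 ⟨hue, hve⟩
      have hadj : (symmGraph ω₁ ω₂).Adj u v := symmGraph_adj.2 ⟨he ▸ hmem, huv⟩
      exact hru.trans hadj.reachable
  · intro ⟨hmem, hr⟩
    rw [Pof, Finset.mem_filter]
    exact ⟨hmem, v, hve, hr⟩

lemma edges_swap_reach {ω₁ ω₂ : Finset (Sym2 V)} {x v : V}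
    (hv : (symmGraph ω₁ ω₂).Reachable x v) {e : Sym2 V} (hve : v ∈ e) :
    e ∈ ω₁ ∆ Pof x (ω₁ ∆ ω₂) ↔ e ∈ ω₂ := by
  rw [Finset.mem_symmDiff, mem_Pof hve]
  simp only [hv, and_true, Finset.mem_symmDiff]
  tauto

lemma edges_swap_not_reach {ω₁ ω₂ : Finset (Sym2 V)} {x v : V}
    (hv : ¬ (symmGraph ω₁ ω₂).Reachable x v) {e : Sym2 V} (hve : v ∈ e) :
    e ∈ ω₁ ∆ Pof x (ω₁ ∆ ω₂) ↔ e ∈ ω₁ := by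
  have hP : e ∉ Pof x (ω₁ ∆ ω₂) := fun h => hv ((mem_Pof hve).1 h).2
  rw [Finset.mem_symmDiff]
  tauto

lemma edges_swap_reach' {ω₁ ω₂ : Finset (Sym2 V)} {x v : V}
    (hv : (symmGraph ω₁ ω₂).Reachable x v) {e : Sym2 V} (hve : v ∈ e) :
    e ∈ ω₂ ∆ Pof x (ω₁ ∆ ω₂) ↔ e ∈ ω₁ := by
  have := edges_swap_reach (ω₁ := ω₂) (ω₂ := ω₁) (x := x) (v := v) (e := e)
  rw [symmDiff_comm ω₂ ω₁, symmGraph_comm ω₂ ω₁] at this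
  exact this hv hve

lemma edges_swap_not_reach' {ω₁ ω₂ : Finset (Sym2 V)} {x v : V}
    (hv : ¬ (symmGraph ω₁ ω₂).Reachable x v) {e : Sym2 V} (hve : v ∈ e) :
    e ∈ ω₂ ∆ Pof x (ω₁ ∆ ω₂) ↔ e ∈ ω₂ := by
  have := edges_swap_not_reach (ω₁ := ω₂) (ω₂ := ω₁) (x := x) (v := v) (e := e)
  rw [symmDiff_comm ω₂ ω₁, symmGraph_comm ω₂ ω₁] at this
  exact this hv hve

lemma exu_congr {ω ω' : Finset (Sym2 V)} {v : V} (h : ∀ e : Sym2 V, v ∈ e → (e ∈ ω ↔ e ∈ ω')) :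
    (∃! e, e ∈ ω ∧ v ∈ e) ↔ (∃! e, e ∈ ω' ∧ v ∈ e) := by
  apply existsUnique_congr
  intro e
  by_cases hv : v ∈ e
  · simp [hv, h e hv]
  · simp [hv]

lemma swap_cover {G : SimpleGraph V} {A B : Finset V} {x y : V} {ω₁ ω₂ : Finset (Sym2 V)}
    (hxy : x ≠ y) (hxA : x ∉ A) (hyA : y ∉ A) (hxB : x ∉ B) (hyB : y ∉ B)
    (h1 : IsDimerCover G (A ∪ {x, y}) ω₁) (h2 : IsDimerCover G B ω₂)
    (hreach : (symmGraph ω₁ ω₂).Reachable x y) :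
    IsDimerCover G A (ω₁ ∆ Pof x (ω₁ ∆ ω₂)) ∧
      IsDimerCover G (B ∪ {x, y}) (ω₂ ∆ Pof x (ω₁ ∆ ω₂)) := by
  set P := Pof x (ω₁ ∆ ω₂) with hPdef
  have hstruct := reachable_not_monomer h1 h2 hxy hreach
  have hedge : ∀ e ∈ ω₁ ∆ ω₂, e ∈ G.edgeSet := by
    intro e he
    rw [Finset.mem_symmDiff] at he
    rcases he with ⟨h, -⟩ | ⟨h, -⟩
    · exact h1.1 e h
    · exact h2.1 e h
  have hRx : (symmGraph ω₁ ω₂).Reachable x x := SimpleGraph.Reachable.refl x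
  constructor
  · refine ⟨?_, ?_, ?_⟩
    · intro e he
      rw [Finset.mem_symmDiff] at he
      rcases he with ⟨h, -⟩ | ⟨h, -⟩
      · exact h1.1 e h
      · exact hedge e (Pof_subset x _ h)
    · intro v hv e he hve
      have hvx : v ≠ x := fun h => hxA (h ▸ hv)
      have hvy : v ≠ y := fun h => hyA (h ▸ hv)
      have hvR : ¬ (symmGraph ω₁ ω₂).Reachable x v := by
        intro hR
        exact hstruct v hR hvx hvy (Finset.mem_union_left _ hv)
      have : e ∈ ω₁ := (edges_swap_not_reach hvR hve).1 he
      exact h1.2.1 v (by simp [hv]) e this hve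
    · intro v hv
      by_cases hR : (symmGraph ω₁ ω₂).Reachable x v
      · have hvB : v ∉ B := by
          by_cases hvx : v = x
          · exact hvx ▸ hxB
          by_cases hvy : v = y
          · exact hvy ▸ hyB
          intro hB
          exact hstruct v hR hvx hvy (Finset.mem_union_right _ hB)
        exact (exu_congr (fun e hve => edges_swap_reach hR hve)).2 (h2.2.2 v hvB)
      · have hvx : v ≠ x := fun h => hR (h ▸ hRx)
        have hvy : v ≠ y := fun h => hR (h ▸ hreach)
        have hv' : v ∉ A ∪ {x, y} := by simp [hv, hvx, hvy]
        exact (exu_congr (fun e hve => edges_swap_not_reach hR hve)).2 (h1.2.2 v hv')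
  · refine ⟨?_, ?_, ?_⟩
    · intro e he
      rw [Finset.mem_symmDiff] at he
      rcases he with ⟨h, -⟩ | ⟨h, -⟩
      · exact h2.1 e h
      · exact hedge e (Pof_subset x _ h)
    · intro v hv e he hve
      rw [Finset.mem_union] at hv
      rcases hv with hv | hv
      · have hvx : v ≠ x := fun h => hxB (h ▸ hv)
        have hvy : v ≠ y := fun h => hyB (h ▸ hv)
        have hvR : ¬ (symmGraph ω₁ ω₂).Reachable x v := by
          intro hR
          exact hstruct v hR hvx hvy (Finset.mem_union_right _ hv)
        have : e ∈ ω₂ := (edges_swap_not_reach' hvR hve).1 he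
        exact h2.2.1 v hv e this hve
      · have hvR : (symmGraph ω₁ ω₂).Reachable x v := by
          rcases Finset.mem_insert.1 hv with rfl | hv'
          · exact hRx
          · rw [Finset.mem_singleton] at hv'
            exact hv' ▸ hreach
        have : e ∈ ω₁ := (edges_swap_reach' hvR hve).1 he
        exact h1.2.1 v (by simp at hv ⊢; tauto) e this hve
    · intro v hv
      rw [Finset.mem_union, not_or] at hv
      obtain ⟨hvB, hvxy⟩ := hv
      have hvx : v ≠ x := by simp at hvxy; tauto
      have hvy : v ≠ y := by simp at hvxy; tauto
      by_cases hR : (symmGraph ω₁ ω₂).Reachable x v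
      · have hvA : v ∉ A ∪ {x, y} := by
          have := hstruct v hR hvx hvy
          simp only [Finset.mem_union, not_or] at this ⊢
          simp [this.1, hvx, hvy]
        exact (exu_congr (fun e hve => edges_swap_reach' hR hve)).2 (h1.2.2 v hvA)
      · exact (exu_congr (fun e hve => edges_swap_not_reach' hR hve)).2 (h2.2.2 v hvB)

lemma prod_swap_eq {K : Sym2 V → ℂ} {ω₁ ω₂ P : Finset (Sym2 V)} (hP : P ⊆ ω₁ ∆ ω₂) :
    (∏ b ∈ ω₁ ∆ P, K b) * ∏ b ∈ ω₂ ∆ P, K b = (∏ b ∈ ω₁, K b) * ∏ b ∈ ω₂, K b := by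
  have e1 : P \ ω₁ = P ∩ ω₂ := by
    ext e
    have := @hP e
    simp only [Finset.mem_sdiff, Finset.mem_inter, Finset.mem_symmDiff] at *
    tauto
  have e2 : P \ ω₂ = P ∩ ω₁ := by
    ext e
    have := @hP e
    simp only [Finset.mem_sdiff, Finset.mem_inter, Finset.mem_symmDiff] at *
    tauto
  have e3 : ω₁ \ P = ω₁ \ (ω₁ ∩ P) := (Finset.sdiff_inter_self_left ω₁ P).symm
  have e4 : ω₂ \ P = ω₂ \ (ω₂ ∩ P) := (Finset.sdiff_inter_self_left ω₂ P).symm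
  have hd1 : Disjoint (ω₁ \ P) (P \ ω₁) := disjoint_sdiff_sdiff
  have hd2 : Disjoint (ω₂ \ P) (P \ ω₂) := disjoint_sdiff_sdiff
  have hsd : ∀ s t : Finset (Sym2 V), s ∆ t = s \ t ∪ t \ s := fun s t => by
    ext e
    simp only [Finset.mem_symmDiff, Finset.mem_sdiff, Finset.mem_union]
  have A1 : (∏ b ∈ ω₁ \ P, K b) * ∏ b ∈ ω₁ ∩ P, K b = ∏ b ∈ ω₁, K b := by
    rw [e3]; exact Finset.prod_sdiff Finset.inter_subset_left
  have A2 : (∏ b ∈ ω₂ \ P, K b) * ∏ b ∈ ω₂ ∩ P, K b = ∏ b ∈ ω₂, K b := by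
    rw [e4]; exact Finset.prod_sdiff Finset.inter_subset_left
  rw [hsd, hsd, Finset.prod_union hd1, Finset.prod_union hd2, e1, e2,
    Finset.inter_comm P ω₂, Finset.inter_comm P ω₁, ← A1, ← A2]
  ring

end Aux

/-- Switching principle I, first identity: the pair of monomers `{x, y}` connected
by a path of the overlay may be moved from the first monomer set to the second. -/
theorem switching_principle_I_first {V : Type*} [Fintype V] [DecidableEq V]
    (G : SimpleGraph V) (K : Sym2 V → ℂ) (M₁ M₂ : Finset V) (x y : V)
    (hdisj : Disjoint M₁ M₂) (hxy : x ≠ y)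
    (hx : x ∉ M₁ ∪ M₂) (hy : y ∉ M₁ ∪ M₂)
    (C : List (V × V)) (hC : ∀ c ∈ C, c.1 ∈ M₁ ∪ M₂ ∧ c.2 ∈ M₁ ∪ M₂) :
    Zdouble G K (M₁ ∪ {x, y}) M₂ ((x, y) :: C) =
      Zdouble G K M₁ (M₂ ∪ {x, y}) ((x, y) :: C) := by
  have hxM₁ : x ∉ M₁ := fun h => hx (Finset.mem_union_left _ h)
  have hxM₂ : x ∉ M₂ := fun h => hx (Finset.mem_union_right _ h)
  have hyM₁ : y ∉ M₁ := fun h => hy (Finset.mem_union_left _ h)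
  have hyM₂ : y ∉ M₂ := fun h => hy (Finset.mem_union_right _ h)
  have hsg : ∀ ω₁ ω₂ : Finset (Sym2 V),
      symmGraph (ω₁ ∆ Pof x (ω₁ ∆ ω₂)) (ω₂ ∆ Pof x (ω₁ ∆ ω₂)) = symmGraph ω₁ ω₂ := by
    intro ω₁ ω₂
    unfold symmGraph
    rw [sd_pair]
  unfold Zdouble
  refine Finset.sum_nbij'
    (i := fun p => (p.1 ∆ Pof x (p.1 ∆ p.2), p.2 ∆ Pof x (p.1 ∆ p.2)))
    (j := fun p => (p.1 ∆ Pof x (p.1 ∆ p.2), p.2 ∆ Pof x (p.1 ∆ p.2)))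
    ?_ ?_ ?_ ?_ ?_
  · -- forward membership
    intro p hp
    obtain ⟨-, hc1, hc2, hreachC⟩ := Finset.mem_filter.1 hp
    have hrxy : (symmGraph p.1 p.2).Reachable x y := hreachC (x, y) List.mem_cons_self
    have hswap := swap_cover hxy hxM₁ hyM₁ hxM₂ hyM₂ hc1 hc2 hrxy
    refine Finset.mem_filter.2 ⟨Finset.mem_univ _, hswap.1, hswap.2, ?_⟩
    intro c hc
    show (symmGraph (p.1 ∆ Pof x (p.1 ∆ p.2)) (p.2 ∆ Pof x (p.1 ∆ p.2))).Reachable c.1 c.2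
    rw [hsg p.1 p.2]
    exact hreachC c hc
  · -- backward membership
    intro p hp
    obtain ⟨-, hc1, hc2, hreachC⟩ := Finset.mem_filter.1 hp
    have hrxy : (symmGraph p.1 p.2).Reachable x y := hreachC (x, y) List.mem_cons_self
    have hrxy' : (symmGraph p.2 p.1).Reachable x y := by
      rw [← symmGraph_comm]; exact hrxy
    have hswap := swap_cover hxy hxM₂ hyM₂ hxM₁ hyM₁ hc2 hc1 hrxy'
    rw [symmDiff_comm p.2 p.1] at hswap
    refine Finset.mem_filter.2 ⟨Finset.mem_univ _, hswap.2, hswap.1, ?_⟩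
    intro c hc
    show (symmGraph (p.1 ∆ Pof x (p.1 ∆ p.2)) (p.2 ∆ Pof x (p.1 ∆ p.2))).Reachable c.1 c.2
    rw [hsg p.1 p.2]
    exact hreachC c hc
  · -- left inverse
    intro p hp
    show ((p.1 ∆ Pof x (p.1 ∆ p.2)) ∆
        Pof x ((p.1 ∆ Pof x (p.1 ∆ p.2)) ∆ (p.2 ∆ Pof x (p.1 ∆ p.2))),
      (p.2 ∆ Pof x (p.1 ∆ p.2)) ∆
        Pof x ((p.1 ∆ Pof x (p.1 ∆ p.2)) ∆ (p.2 ∆ Pof x (p.1 ∆ p.2)))) = p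
    rw [sd_pair, sd_cancel, sd_cancel]
  · -- right inverse
    intro p hp
    show ((p.1 ∆ Pof x (p.1 ∆ p.2)) ∆
        Pof x ((p.1 ∆ Pof x (p.1 ∆ p.2)) ∆ (p.2 ∆ Pof x (p.1 ∆ p.2))),
      (p.2 ∆ Pof x (p.1 ∆ p.2)) ∆
        Pof x ((p.1 ∆ Pof x (p.1 ∆ p.2)) ∆ (p.2 ∆ Pof x (p.1 ∆ p.2)))) = p
    rw [sd_pair, sd_cancel, sd_cancel]
  · -- weights
    intro p hp
    exact (prod_swap_eq (Pof_subset x (p.1 ∆ p.2))).symm
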